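/- arXiv:2012.04679 — 2 statements merged into one kernel-verified Lean document; each statement's English description precedes it below -/
import Mathlib

section
/- Let T ∈ ℂ^a ⊗ ℂ^b ⊗ ℂ^c be concise and let 0 ≤ k ≤ b, 0 ≤ ℓ ≤ c. Suppose that every matrix X ∈ T(A^*) has a zero lower-right block, i.e. X_{j,k'} = 0 whenever j > k and k' > ℓ (so T(A^*) is a compression space of bounded rank k + ℓ). Then the tensor rank satisfies R(T) ≥ (b − k) + (c − ℓ). -/
open scoped BigOperators

noncomputable section

/-- The ideal of all polynomials vanishing on a subset `S` of affine space `σ → ℂ`. -/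
def vanishingIdeal' {σ : Type} (S : Set (σ → ℂ)) : Ideal (MvPolynomial σ ℂ) where
  carrier := {p | ∀ x ∈ S, MvPolynomial.eval x p = 0}
  add_mem' := by
    intro p q hp hq x hx
    simp [hp x hx, hq x hx]
  zero_mem' := by
    intro x hx
    simp
  smul_mem' := by
    intro c p hp x hx
    simp [smul_eq_mul, hp x hx]

/-- The dimension of an affine algebraic set `S ⊆ ℂ^σ`: the Krull dimension of its
coordinate ring.  The empty set has dimension `⊥` (i.e. `-∞`). -/
def affineDim {σ : Type} (S : Set (σ → ℂ)) : WithBot (WithTop ℕ) :=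
  ringKrullDim (MvPolynomial σ ℂ ⧸ vanishingIdeal' S)

/-- The dimension of an affine algebraic set, as a natural number. -/
def affineDimNat {σ : Type} (S : Set (σ → ℂ)) : ℕ :=
  ENat.toNat (WithBot.unbotD 0 (affineDim S))

variable {ι₁ ι₂ ι₃ : Type} [Fintype ι₁] [Fintype ι₂] [Fintype ι₃]

/-- The affine algebraic set `Σ̂^{AB}_T ⊆ ℂ^{ι₁} × ℂ^{ι₂}`. -/
def hatSigmaAB (T : ι₁ → ι₂ → ι₃ → ℂ) : Set (ι₁ ⊕ ι₂ → ℂ) :=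
  {x | ∀ k : ι₃, ∑ i : ι₁, ∑ j : ι₂, T i j k * x (Sum.inl i) * x (Sum.inr j) = 0}

/-- The geometric rank `GR(T) = (a+b) - dim Σ̂^{AB}_T`. -/
def geomRank (T : ι₁ → ι₂ → ι₃ → ℂ) : ℕ :=
  (Fintype.card ι₁ + Fintype.card ι₂) - affineDimNat (hatSigmaAB T)

/-- The flattening `T(α)`, a `ι₂ × ι₃` matrix, for `α ∈ ℂ^{ι₁}`. -/
def sliceA (T : ι₁ → ι₂ → ι₃ → ℂ) (α : ι₁ → ℂ) : Matrix ι₂ ι₃ ℂ :=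
  Matrix.of fun j k => ∑ i : ι₁, T i j k * α i

/-- The flattening `T(β)`, a `ι₁ × ι₃` matrix, for `β ∈ ℂ^{ι₂}`. -/
def sliceB (T : ι₁ → ι₂ → ι₃ → ℂ) (β : ι₂ → ℂ) : Matrix ι₁ ι₃ ℂ :=
  Matrix.of fun i k => ∑ j : ι₂, T i j k * β j

/-- The flattening `T(γ)`, a `ι₁ × ι₂` matrix, for `γ ∈ ℂ^{ι₃}`. -/
def sliceC (T : ι₁ → ι₂ → ι₃ → ℂ) (γ : ι₃ → ℂ) : Matrix ι₁ ι₂ ℂ :=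
  Matrix.of fun i j => ∑ k : ι₃, T i j k * γ k

/-- A tensor is concise if its three flattening maps are injective. -/
def Concise (T : ι₁ → ι₂ → ι₃ → ℂ) : Prop :=
  Function.Injective (sliceA T) ∧ Function.Injective (sliceB T) ∧
    Function.Injective (sliceC T)

/-- The tensor rank: least `r` such that `T` is a sum of `r` rank-one tensors. -/
def tensorRank (T : ι₁ → ι₂ → ι₃ → ℂ) : ℕ :=
  sInf {r : ℕ | ∃ (u : Fin r → ι₁ → ℂ) (v : Fin r → ι₂ → ℂ) (w : Fin r → ι₃ → ℂ),
    T = fun i j k => ∑ s : Fin r, u s i * v s j * w s k}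

/-- The border rank: least `r` such that `T` is a limit of tensors of rank at most `r`. -/
def borderRank (T : ι₁ → ι₂ → ι₃ → ℂ) : ℕ :=
  sInf {r : ℕ | T ∈ closure {T' : ι₁ → ι₂ → ι₃ → ℂ |
    ∃ (u : Fin r → ι₁ → ℂ) (v : Fin r → ι₂ → ℂ) (w : Fin r → ι₃ → ℂ),
      T' = fun i j k => ∑ s : Fin r, u s i * v s j * w s k}}

/-- The elementary (rank-one) basis tensor `e_i ⊗ e_j ⊗ e_k`. -/
def E {a b c : ℕ} (i : Fin a) (j : Fin b) (k : Fin c) : Fin a → Fin b → Fin c → ℂ :=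
  fun i' j' k' => if i' = i ∧ j' = j ∧ k' = k then 1 else 0

/-- The Kronecker product of two 3-tensors. -/
def kron {κ₁ κ₂ κ₃ : Type} [Fintype κ₁] [Fintype κ₂] [Fintype κ₃]
    (T : ι₁ → ι₂ → ι₃ → ℂ) (T' : κ₁ → κ₂ → κ₃ → ℂ) :
    ι₁ × κ₁ → ι₂ × κ₂ → ι₃ × κ₃ → ℂ :=
  fun i j k => T i.1 j.1 k.1 * T' i.2 j.2 k.2

/-- The tensor obtained from `T` by permuting the three factors by `σ`. -/
def permuteTensor {m : ℕ} (σ : Equiv.Perm (Fin 3)) (T : Fin m → Fin m → Fin m → ℂ) :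
    Fin m → Fin m → Fin m → ℂ :=
  fun i j k => T (![i, j, k] (σ 0)) (![i, j, k] (σ 1)) (![i, j, k] (σ 2))

/-- The action of a triple of linear maps on a tensor. -/
def actTensor {m : ℕ} (g₁ g₂ g₃ : Matrix (Fin m) (Fin m) ℂ)
    (T : Fin m → Fin m → Fin m → ℂ) : Fin m → Fin m → Fin m → ℂ :=
  fun i j k => ∑ i' : Fin m, ∑ j' : Fin m, ∑ k' : Fin m,
    g₁ i i' * g₂ j j' * g₃ k k' * T i' j' k'

/-- Two tensors are equivalent if one is obtained from the other by invertible linear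
maps on each factor together with a permutation of the three factors. -/
def equivTensor {m : ℕ} (T T' : Fin m → Fin m → Fin m → ℂ) : Prop :=
  ∃ (σ : Equiv.Perm (Fin 3)) (g₁ g₂ g₃ : Matrix (Fin m) (Fin m) ℂ),
    IsUnit g₁ ∧ IsUnit g₂ ∧ IsUnit g₃ ∧
    T' = actTensor g₁ g₂ g₃ (permuteTensor σ T)

/-- `T` is `1_*`-generic: some flattening space contains a matrix of full rank. -/
def OneStarGeneric {m : ℕ} (T : Fin m → Fin m → Fin m → ℂ) : Prop :=
  (∃ α, IsUnit (sliceA T α)) ∨ (∃ β, IsUnit (sliceB T β)) ∨ (∃ γ, IsUnit (sliceC T γ))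

end


noncomputable section StmtAux

def subEquiv (n m : ℕ) : {j : Fin n // m ≤ (j : ℕ)} ≃ Fin (n - m) where
  toFun j := ⟨(j.1 : ℕ) - m, by have h1 := j.1.isLt; have h2 := j.2; omega⟩
  invFun x := ⟨⟨m + x.1, by have := x.isLt; omega⟩, by simp⟩
  left_inv j := by
    apply Subtype.ext; apply Fin.ext; have := j.2; simp; omega
  right_inv x := by apply Fin.ext; simp

lemma card_sub (n m : ℕ) : Fintype.card {j : Fin n // m ≤ (j : ℕ)} = n - m := by
  rw [Fintype.card_congr (subEquiv n m), Fintype.card_fin]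

lemma sum_ext_eq {n m : ℕ} (g : Fin n → ℂ) (β : {j : Fin n // m ≤ (j : ℕ)} → ℂ) :
    ∑ j : Fin n, g j * (if h : m ≤ (j : ℕ) then β ⟨j, h⟩ else 0)
      = ∑ j : {j : Fin n // m ≤ (j : ℕ)}, g j.1 * β j := by
  classical
  rw [← Fintype.sum_subtype_add_sum_subtype (fun j : Fin n => m ≤ (j : ℕ))
      (fun j => g j * (if h : m ≤ (j : ℕ) then β ⟨j, h⟩ else 0))]
  have h2 : ∑ j : {j : Fin n // ¬ m ≤ (j : ℕ)},
      g j.1 * (if h : m ≤ (j.1 : ℕ) then β ⟨j.1, h⟩ else 0) = 0 := by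
    apply Finset.sum_eq_zero; intro j _; rw [dif_neg j.2, mul_zero]
  rw [h2, add_zero]
  apply Finset.sum_congr rfl; intro j _; rw [dif_pos j.2]

lemma exists_decomp (a b c : ℕ) (T : Fin a → Fin b → Fin c → ℂ) :
    ∃ (r : ℕ) (u : Fin r → Fin a → ℂ) (v : Fin r → Fin b → ℂ) (w : Fin r → Fin c → ℂ),
      T = fun i j k => ∑ s : Fin r, u s i * v s j * w s k := by
  classical
  set P := Fin a × Fin b × Fin c
  refine ⟨Fintype.card P, ?_⟩
  set e := (Fintype.equivFin P).symm with he
  refine ⟨fun s i => if (e s).1 = i then 1 else 0,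
    fun s j => if (e s).2.1 = j then 1 else 0,
    fun s k => if (e s).2.2 = k then T (e s).1 (e s).2.1 (e s).2.2 else 0, ?_⟩
  funext i j k
  rw [Fintype.sum_equiv e
    (fun s => (if (e s).1 = i then (1:ℂ) else 0) * (if (e s).2.1 = j then 1 else 0) *
      (if (e s).2.2 = k then T (e s).1 (e s).2.1 (e s).2.2 else 0))
    (fun p : P => (if p.1 = i then (1:ℂ) else 0) * (if p.2.1 = j then 1 else 0) *
      (if p.2.2 = k then T p.1 p.2.1 p.2.2 else 0))
    (fun s => rfl)]
  rw [Fintype.sum_eq_single (⟨i, j, k⟩ : P)]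
  · simp
  · intro p hp
    by_cases h1 : p.1 = i <;> by_cases h2 : p.2.1 = j <;> by_cases h3 : p.2.2 = k <;>
      simp_all [Prod.ext_iff]

end StmtAux

/-- If `T` is concise and `T(A^*)` is a compression space with zero
lower-right `(b-k) × (c-ℓ)` block, then `R(T) ≥ (b-k) + (c-ℓ)`. -/
theorem stmt_8 (a b c k l : ℕ) (hk : k ≤ b) (hl : l ≤ c)
    (T : Fin a → Fin b → Fin c → ℂ) (hT : Concise T)
    (hzero : ∀ (α : Fin a → ℂ) (j : Fin b) (k' : Fin c),
      k ≤ (j : ℕ) → l ≤ (k' : ℕ) → sliceA T α j k' = 0) :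
    (b - k) + (c - l) ≤ tensorRank T := by
  classical
  obtain ⟨hA, hB, hC⟩ := hT
  -- the tensor itself has a zero block
  have hTz : ∀ (i : Fin a) (j : Fin b) (k' : Fin c),
      k ≤ (j : ℕ) → l ≤ (k' : ℕ) → T i j k' = 0 := by
    intro i j k' hj hk'
    have h := hzero (Pi.single i 1) j k' hj hk'
    simp only [sliceA, Matrix.of_apply] at h
    rwa [Fintype.sum_eq_single i
      (fun i' hi' => by simp [Pi.single_apply, hi']),
      Pi.single_eq_same, mul_one] at h
  -- conciseness restated
  have hBz : ∀ β : Fin b → ℂ, sliceB T β = 0 → β = 0 := by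
    intro β h
    have h0 : sliceB T (0 : Fin b → ℂ) = 0 := by
      ext i k'; simp [sliceB]
    exact hB (h.trans h0.symm)
  have hCz : ∀ γ : Fin c → ℂ, sliceC T γ = 0 → γ = 0 := by
    intro γ h
    have h0 : sliceC T (0 : Fin c → ℂ) = 0 := by
      ext i j; simp [sliceC]
    exact hC (h.trans h0.symm)
  -- a minimal decomposition
  set r := tensorRank T with hrdef
  obtain ⟨u, v, w, hdec⟩ :
      ∃ (u : Fin r → Fin a → ℂ) (v : Fin r → Fin b → ℂ) (w : Fin r → Fin c → ℂ),
        T = fun i j k' => ∑ s : Fin r, u s i * v s j * w s k' := by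
    have hne : {r : ℕ | ∃ (u : Fin r → Fin a → ℂ) (v : Fin r → Fin b → ℂ)
        (w : Fin r → Fin c → ℂ),
        T = fun i j k => ∑ s : Fin r, u s i * v s j * w s k}.Nonempty := by
      obtain ⟨r0, u, v, w, h⟩ := exists_decomp a b c T
      exact ⟨r0, u, v, w, h⟩
    exact Nat.sInf_mem hne
  -- the projected B-family, as a matrix
  set Pv : Fin r → ({j : Fin b // k ≤ (j : ℕ)} → ℂ) := fun s j => v s j.1 with hPv
  -- injectivity of β ↦ (⟨Pv s, β⟩)_s
  have hfinj : Function.Injective ((Matrix.of Pv).mulVecLin) := by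
    rw [← LinearMap.ker_eq_bot, LinearMap.ker_eq_bot']
    intro β hβ
    have hb0 : (fun j : Fin b => if h : k ≤ (j : ℕ) then β ⟨j, h⟩ else 0) = 0 := by
      apply hBz
      ext i k'
      simp only [sliceB, Matrix.of_apply, Matrix.zero_apply]
      rw [sum_ext_eq (fun j => T i j k') β]
      have hterm : ∀ j : {j : Fin b // k ≤ (j : ℕ)}, T i j.1 k' * β j
          = ∑ s : Fin r, (u s i * w s k') * (v s j.1 * β j) := by
        intro j
        rw [hdec]
        simp only []
        rw [Finset.sum_mul]
        exact Finset.sum_congr rfl (fun s _ => by ring)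
      rw [Finset.sum_congr rfl (fun j _ => hterm j), Finset.sum_comm]
      apply Finset.sum_eq_zero; intro s _
      rw [← Finset.mul_sum]
      have hz : ∑ j : {j : Fin b // k ≤ (j : ℕ)}, v s j.1 * β j = 0 := by
        have h := congrFun hβ s
        simpa [Matrix.mulVecLin_apply, Matrix.mulVec, dotProduct, hPv] using h
      rw [hz, mul_zero]
    funext j
    have h := congrFun hb0 j.1
    rwa [dif_pos j.2] at h
  -- hence the projected family spans
  have hspan : Submodule.span ℂ (Set.range Pv) = ⊤ := by
    have hrank : (Matrix.of Pv).rank = b - k := by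
      have h := LinearMap.finrank_range_of_inj hfinj
      rw [Module.finrank_pi, card_sub] at h
      exact h
    have h1 : ((Matrix.of Pv).transpose).rank = b - k := by
      rw [Matrix.rank_transpose]; exact hrank
    have h2 : LinearMap.range ((Matrix.of Pv).transpose).mulVecLin = ⊤ := by
      apply Submodule.eq_top_of_finrank_eq
      rw [Module.finrank_pi, card_sub]
      exact h1
    rw [Matrix.range_mulVecLin] at h2
    exact h2
  -- extract a basis from the spanning family
  obtain ⟨tset, hts, htsp, htind⟩ := exists_linearIndependent ℂ (Set.range Pv)
  have htfin : tset.Finite := Set.Finite.subset (Set.finite_range Pv) hts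
  have : Fintype tset := htfin.fintype
  have hbspan : ⊤ ≤ Submodule.span ℂ (Set.range (Subtype.val : tset → ({j : Fin b // k ≤ (j : ℕ)} → ℂ))) := by
    rw [Subtype.range_coe]
    rw [htsp, hspan]
  let Bas : Module.Basis tset ℂ ({j : Fin b // k ≤ (j : ℕ)} → ℂ) := Module.Basis.mk htind hbspan
  have htcard : Fintype.card tset = b - k := by
    have h := Module.finrank_eq_card_basis Bas
    rw [Module.finrank_pi, card_sub] at h
    exact h.symm
  -- choose preimages under Pv
  have hchoice : ∀ x : tset, ∃ s : Fin r, Pv s = (x : _) := fun x => hts x.2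
  choose σ hσ using hchoice
  have hσinj : Function.Injective σ := by
    intro x y hxy
    apply Subtype.ext
    rw [← hσ x, ← hσ y, hxy]
  -- the coordinate subspace C
  have hsingind : LinearIndependent ℂ (fun x : tset => (Pi.single (σ x) (1 : ℂ) : Fin r → ℂ)) := by
    rw [Fintype.linearIndependent_iff]
    intro g hg x0
    have h := congrFun hg (σ x0)
    simp only [Finset.sum_apply, Pi.smul_apply, Pi.single_apply, smul_eq_mul,
      Pi.zero_apply] at h
    rwa [Fintype.sum_eq_single x0
      (fun x hx => by rw [if_neg (fun hh : σ x0 = σ x => hx (hσinj hh.symm)), mul_zero]),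
      if_pos rfl, mul_one] at h
  set C : Submodule ℂ (Fin r → ℂ) :=
    Submodule.span ℂ (Set.range (fun x : tset => (Pi.single (σ x) (1 : ℂ) : Fin r → ℂ))) with hCdef
  have hCsupp : ∀ y ∈ C, ∀ s : Fin r, (∀ x0 : tset, σ x0 ≠ s) → y s = 0 := by
    intro y hy
    induction hy using Submodule.span_induction with
    | mem y hy =>
      obtain ⟨x0, rfl⟩ := hy
      intro s hs
      exact Pi.single_eq_of_ne (Ne.symm (hs x0)) 1
    | zero => intro s _; rfl
    | add y z _ _ hy hz => intro s hs; simp [hy s hs, hz s hs]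
    | smul m y _ hy => intro s hs; simp [hy s hs]
  -- the C-side linear map
  set Hf : ({k' : Fin c // l ≤ (k' : ℕ)} → ℂ) →ₗ[ℂ] (Fin r → ℂ) :=
    { toFun := fun γ s => ∑ k' : {k' : Fin c // l ≤ (k' : ℕ)}, w s k'.1 * γ k'
      map_add' := by
        intro γ1 γ2; funext s
        simp [mul_add, Finset.sum_add_distrib]
      map_smul' := by
        intro m γ; funext s
        simp only [Pi.smul_apply, smul_eq_mul, RingHom.id_apply]
        rw [Finset.mul_sum]
        exact Finset.sum_congr rfl (fun k' _ => by ring) } with hHf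
  -- key computation: entries of sliceC of the extension
  have hKC : ∀ (γ : {k' : Fin c // l ≤ (k' : ℕ)} → ℂ) (i : Fin a) (j : Fin b),
      sliceC T (fun k' => if h : l ≤ (k' : ℕ) then γ ⟨k', h⟩ else 0) i j
        = ∑ s : Fin r, u s i * v s j * Hf γ s := by
    intro γ i j
    simp only [sliceC, Matrix.of_apply]
    rw [sum_ext_eq (fun k' => T i j k') γ]
    have hterm : ∀ k' : {k' : Fin c // l ≤ (k' : ℕ)}, T i j k'.1 * γ k'
        = ∑ s : Fin r, (u s i * v s j) * (w s k'.1 * γ k') := by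
      intro k'
      rw [hdec]
      simp only []
      rw [Finset.sum_mul]
      exact Finset.sum_congr rfl (fun s _ => by ring)
    rw [Finset.sum_congr rfl (fun k' _ => hterm k'), Finset.sum_comm]
    apply Finset.sum_congr rfl; intro s _
    rw [← Finset.mul_sum]
    rfl
  -- the key claim
  have hKey : ∀ γ : {k' : Fin c // l ≤ (k' : ℕ)} → ℂ,
      (∀ s : Fin r, (∀ x0 : tset, σ x0 ≠ s) → Hf γ s = 0) → γ = 0 := by
    intro γ hsupp
    have hstar : ∀ (i : Fin a) (j : {j : Fin b // k ≤ (j : ℕ)}),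
        ∑ s : Fin r, u s i * v s j.1 * Hf γ s = 0 := by
      intro i j
      rw [← hKC γ i j.1]
      simp only [sliceC, Matrix.of_apply]
      apply Finset.sum_eq_zero; intro k' _
      by_cases h : l ≤ (k' : ℕ)
      · rw [hTz i j.1 k' j.2 h, zero_mul]
      · rw [dif_neg h, mul_zero]
    have hd : ∀ (i : Fin a) (s : Fin r), u s i * Hf γ s = 0 := by
      intro i
      have hsum0 : ∑ y : tset, (u (σ y) i * Hf γ (σ y)) • ((y : _) :
          {j : Fin b // k ≤ (j : ℕ)} → ℂ) = 0 := by
        have h1 : ∑ s : Fin r, (u s i * Hf γ s) • Pv s = 0 := by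
          funext j
          simp only [Finset.sum_apply, Pi.smul_apply, smul_eq_mul, Pi.zero_apply]
          rw [← hstar i j]
          exact Finset.sum_congr rfl (fun s _ => by rw [hPv]; ring)
        have h2 : ∑ s : Fin r, (u s i * Hf γ s) • Pv s
            = ∑ s ∈ Finset.image σ Finset.univ, (u s i * Hf γ s) • Pv s := by
          symm
          apply Finset.sum_subset (Finset.subset_univ _)
          intro s _ hs
          have hxs : ∀ x0 : tset, σ x0 ≠ s := by
            intro x0 hx0
            exact hs (Finset.mem_image.mpr ⟨x0, Finset.mem_univ _, hx0⟩)
          rw [hsupp s hxs, mul_zero, zero_smul]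
        rw [h2, Finset.sum_image (fun x _ y _ hxy => hσinj hxy)] at h1
        calc ∑ y : tset, (u (σ y) i * Hf γ (σ y)) • ((y : _) : _ → ℂ)
            = ∑ y : tset, (u (σ y) i * Hf γ (σ y)) • Pv (σ y) := by
              exact Finset.sum_congr rfl (fun y _ => by rw [hσ y])
          _ = 0 := h1
      have hcoef := Fintype.linearIndependent_iff.mp htind
        (fun y => u (σ y) i * Hf γ (σ y)) hsum0
      intro s
      by_cases hs : ∃ y : tset, σ y = s
      · obtain ⟨y, rfl⟩ := hs
        exact hcoef y
      · push_neg at hs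
        rw [hsupp s hs, mul_zero]
    have h0 : sliceC T (fun k' => if h : l ≤ (k' : ℕ) then γ ⟨k', h⟩ else 0) = 0 := by
      ext i j
      rw [hKC γ i j]
      simp only [Matrix.zero_apply]
      apply Finset.sum_eq_zero; intro s _
      have := hd i s
      calc u s i * v s j * Hf γ s = v s j * (u s i * Hf γ s) := by ring
        _ = 0 := by rw [this, mul_zero]
    have hext := hCz _ h0
    funext k'
    have h := congrFun hext k'.1
    rwa [dif_pos k'.2] at h
  -- Hf is injective
  have hHinj : Function.Injective Hf := by
    rw [← LinearMap.ker_eq_bot, LinearMap.ker_eq_bot']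
    intro γ hγ
    exact hKey γ (fun s _ => by rw [hγ]; rfl)
  -- C and range Hf intersect trivially
  have hdisj : C ⊓ LinearMap.range Hf = ⊥ := by
    rw [eq_bot_iff]
    rintro y ⟨hyC, γ, rfl⟩
    have hγ0 : γ = 0 := hKey γ (fun s hs => hCsupp _ hyC s hs)
    rw [hγ0, map_zero]
    exact Submodule.zero_mem ⊥
  -- dimension count
  have h1 : Module.finrank ℂ C = b - k := by
    rw [hCdef, finrank_span_eq_card hsingind, htcard]
  have h2 : Module.finrank ℂ (LinearMap.range Hf) = c - l := by
    rw [LinearMap.finrank_range_of_inj hHinj, Module.finrank_pi, card_sub]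
  have h3 := Submodule.finrank_sup_add_finrank_inf_eq C (LinearMap.range Hf)
  rw [hdisj, finrank_bot, add_zero, h1, h2] at h3
  have h4 : Module.finrank ℂ ↑(C ⊔ LinearMap.range Hf) ≤ r := by
    have h := Submodule.finrank_le (C ⊔ LinearMap.range Hf)
    rwa [Module.finrank_pi, Fintype.card_fin] at h
  omega
end

section
/- Let q ≥ 2 and let T_{str,q} ∈ ℂ^{q+1} ⊗ ℂ^{q+1} ⊗ ℂ^q be Strassen's tensor, T_{str,q} = ∑_{j=1}^q ( e_0⊗e_j⊗f_j + e_j⊗e_0⊗f_j ), where e_0,…,e_q is the standard basis of ℂ^{q+1} and f_1,…,f_q is the standard basis of ℂ^q. Then GR(T_{str,q}) = 2. -/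
open scoped BigOperators

open MvPolynomial


/-- helper: a coordinate of a finsupp is at most its sum -/
lemma coord_le_sum {τ : Type} (m : τ →₀ ℕ) (j : τ) : m j ≤ m.sum fun _ e => e := by
  by_cases h : m j = 0
  · simp [h]
  · exact Finset.single_le_sum (f := fun i => m i) (fun _ _ => Nat.zero_le _)
      (Finsupp.mem_support_iff.mpr h)

/-- Any `N` polynomials in fewer than `N` variables are algebraically dependent. -/
lemma exists_annihilator {τ : Type} [Fintype τ] (N : ℕ) (hN : Fintype.card τ < N)
    (t : Fin N → MvPolynomial τ ℂ) :
    ∃ Q : MvPolynomial (Fin N) ℂ, Q ≠ 0 ∧ MvPolynomial.aeval t Q = 0 := by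
  classical
  set n := Fintype.card τ with hn
  set d := 1 + Finset.univ.sup (fun i => (t i).totalDegree) with hd
  have htd : ∀ i, (t i).totalDegree ≤ d := fun i =>
    le_trans (Finset.le_sup (f := fun i => (t i).totalDegree) (Finset.mem_univ i)) (Nat.le_add_left _ _)
  set c := N * d with hc
  have hN1 : 1 ≤ N := lt_of_le_of_lt (Nat.zero_le _) hN
  have hc1 : 1 ≤ c := Nat.one_le_iff_ne_zero.mpr (Nat.mul_ne_zero (by omega) (by omega))
  set D := c ^ n with hD
  set E := c * D with hE
  set F : (Fin N → Fin (D + 1)) → MvPolynomial τ ℂ := fun a => ∏ i, (t i) ^ (a i : ℕ) with hF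
  have hdeg : ∀ a, (F a).totalDegree ≤ E := by
    intro a
    refine le_trans (totalDegree_finset_prod _ _) ?_
    have : ∀ i : Fin N, ((t i) ^ (a i : ℕ)).totalDegree ≤ d * D := by
      intro i
      refine le_trans (totalDegree_pow _ _) ?_
      have h1 : (a i : ℕ) ≤ D := Nat.lt_succ_iff.mp (a i).isLt
      calc (a i : ℕ) * (t i).totalDegree ≤ D * d := Nat.mul_le_mul h1 (htd i)
        _ = d * D := Nat.mul_comm _ _
    refine le_trans (Finset.sum_le_sum fun i _ => this i) ?_
    simp [hE, hc]; ring_nf; omega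
  -- the coefficient-extraction linear map
  set L : MvPolynomial τ ℂ →ₗ[ℂ] ((τ → Fin (E + 1)) → ℂ) :=
    { toFun := fun p f => coeff (Finsupp.equivFunOnFinite.symm fun j => ((f j : ℕ))) p
      map_add' := by intro p q; funext f; simp [coeff_add]
      map_smul' := by intro r p; funext f; simp } with hL
  have hnotli : ¬ LinearIndependent ℂ (fun a => L (F a)) := by
    intro h
    have hcard := h.fintype_card_le_finrank
    rw [Module.finrank_fintype_fun_eq_card, Fintype.card_fun, Fintype.card_fin,
      Fintype.card_fin, Fintype.card_fun, Fintype.card_fin, ← hn] at hcard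
    -- hcard : (D+1)^N ≤ (E+1)^n
    have h1 : E + 1 ≤ c * (D + 1) := by rw [Nat.mul_add, Nat.mul_one]; omega
    have h2 : (E + 1) ^ n ≤ (c * (D + 1)) ^ n := Nat.pow_le_pow_left h1 n
    have h3 : (c * (D + 1)) ^ n = D * (D + 1) ^ n := by
      rw [Nat.mul_pow, hD]
    have hp : 0 < (D + 1) ^ n := Nat.pow_pos (by omega)
    have h4 : D * (D + 1) ^ n < (D + 1) ^ (n + 1) := by
      calc D * (D + 1) ^ n < (D + 1) * (D + 1) ^ n :=
            Nat.mul_lt_mul_of_pos_right (Nat.lt_succ_self D) hp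
        _ = (D + 1) ^ (n + 1) := by rw [pow_succ, Nat.mul_comm]
    have h5 : (D + 1) ^ (n + 1) ≤ (D + 1) ^ N := Nat.pow_le_pow_right (by omega) (by omega)
    omega
  rw [Fintype.not_linearIndependent_iff] at hnotli
  obtain ⟨g, hsum, a₀, hg⟩ := hnotli
  have hsum' : L (∑ a, g a • F a) = 0 := by
    rw [map_sum]; simpa using hsum
  have hP : (∑ a, g a • F a) = 0 := by
    ext m
    rw [coeff_zero]
    by_cases hm : ∀ j, m j ≤ E
    · have h2 := congrFun hsum' (fun j => (⟨m j, Nat.lt_succ_of_le (hm j)⟩ : Fin (E + 1)))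
      rw [MvPolynomial.coeff_sum]
      simp only [MvPolynomial.coeff_smul]
      simpa [hL, Finsupp.equivFunOnFinite_symm_coe, MvPolynomial.coeff_sum,
        MvPolynomial.coeff_smul] using h2
    · push_neg at hm
      obtain ⟨j, hj⟩ := hm
      rw [MvPolynomial.coeff_sum]
      refine Finset.sum_eq_zero fun a _ => ?_
      rw [MvPolynomial.coeff_smul]
      have : coeff m (F a) = 0 := by
        by_contra hne
        have hmem : m ∈ (F a).support := MvPolynomial.mem_support_iff.mpr hne
        have := le_trans (coord_le_sum m j) (le_trans (le_totalDegree hmem) (hdeg a))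
        omega
      simp [this]
  refine ⟨∑ a, MvPolynomial.monomial (Finsupp.equivFunOnFinite.symm fun i => ((a i : ℕ))) (g a),
    ?_, ?_⟩
  · intro h0
    have hcoeff := congrArg (coeff (Finsupp.equivFunOnFinite.symm fun i => ((a₀ i : ℕ)))) h0
    rw [MvPolynomial.coeff_sum, coeff_zero] at hcoeff
    have hinj : Function.Injective
        (fun a : Fin N → Fin (D+1) => Finsupp.equivFunOnFinite.symm fun i => ((a i : ℕ))) := by
      intro a b hab
      have := Finsupp.equivFunOnFinite.symm.injective hab
      funext i
      exact Fin.ext (congrFun this i)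
    rw [Finset.sum_eq_single a₀] at hcoeff
    · rw [MvPolynomial.coeff_monomial, if_pos rfl] at hcoeff; exact hg hcoeff
    · intro b _ hb
      rw [MvPolynomial.coeff_monomial, if_neg (fun h => hb (hinj h))]
    · intro h; exact absurd (Finset.mem_univ a₀) h
  · rw [map_sum]
    rw [← hP]
    refine Finset.sum_congr rfl fun a _ => ?_
    rw [MvPolynomial.aeval_monomial]
    rw [Finsupp.prod_fintype _ _ (fun i => pow_zero _)]
    simp [hF, Algebra.smul_def]


/-- Factor out the largest power of X from a nonzero polynomial over a domain. -/
lemma peel {A : Type*} [CommRing A] [IsDomain A] (P : Polynomial A) (hP : P ≠ 0) :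
    ∃ (d : ℕ) (P₁ : Polynomial A), P = Polynomial.X ^ d * P₁ ∧ P₁.coeff 0 ≠ 0 := by
  generalize hdeg : P.natDegree = deg
  induction deg using Nat.strong_induction_on generalizing P with
  | _ deg ih =>
    by_cases h0 : P.coeff 0 = 0
    · obtain ⟨P₂, hP₂⟩ := Polynomial.X_dvd_iff.mpr h0
      have hP₂0 : P₂ ≠ 0 := by rintro rfl; simp at hP₂; exact hP hP₂
      have hdeg2 : P₂.natDegree < deg := by
        subst hdeg
        rw [hP₂, Polynomial.natDegree_mul Polynomial.X_ne_zero hP₂0, Polynomial.natDegree_X]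
        omega
      obtain ⟨d, P₁, h1, h2⟩ := ih P₂.natDegree hdeg2 P₂ hP₂0 rfl
      exact ⟨d + 1, P₁, by rw [hP₂, h1]; ring, h2⟩
    · exact ⟨0, P, by simp, h0⟩

/-- Coquand–Lombardi style lemma: a nonzero polynomial relation landing in the bottom of a
strict chain of primes is impossible. -/
lemma cl_lemma {R : Type} [CommRing R] [Algebra ℂ R] : ∀ (m : ℕ)
    (p : Fin (m + 1) → Ideal R) (_ : ∀ k, (p k).IsPrime)
    (_ : ∀ i : Fin m, p i.castSucc ≤ p i.succ)
    (t : Fin m → R) (_ : ∀ i : Fin m, t i ∈ p i.succ) (_ : ∀ i : Fin m, t i ∉ p i.castSucc)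
    (Q : MvPolynomial (Fin m) ℂ) (_ : Q ≠ 0),
    MvPolynomial.aeval t Q ∉ p 0 := by
  intro m
  induction m with
  | zero =>
    intro p hprime _ t _ _ Q hQ haQ
    obtain ⟨c, rfl⟩ := MvPolynomial.C_surjective (Fin 0) Q
    have hc : c ≠ 0 := fun h => hQ (by rw [h, map_zero])
    rw [MvPolynomial.aeval_C] at haQ
    exact (hprime 0).ne_top (Ideal.eq_top_of_isUnit_mem _ haQ
      ((isUnit_iff_ne_zero.mpr hc).map (algebraMap ℂ R)))
  | succ m ih =>
    intro p hprime hchain t hmem hnmem Q hQ haQ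
    set P : Polynomial (MvPolynomial (Fin m) ℂ) := finSuccEquiv ℂ m Q with hPdef
    have hP : P ≠ 0 := by
      intro h
      exact hQ ((map_eq_zero_iff _ (AlgEquiv.injective _)).mp h)
    obtain ⟨d, P₁, hfact, hc0⟩ := peel P hP
    -- evaluation formula
    have keval : ∀ (Q' : MvPolynomial (Fin (m+1)) ℂ),
        MvPolynomial.aeval t Q' = Polynomial.eval₂
          (MvPolynomial.aeval (t ∘ Fin.succ) : MvPolynomial (Fin m) ℂ →ₐ[ℂ] R).toRingHom
          (t 0) (finSuccEquiv ℂ m Q') := by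
      intro Q'
      have : (MvPolynomial.aeval t : MvPolynomial (Fin (m+1)) ℂ →ₐ[ℂ] R).toRingHom =
          (Polynomial.eval₂RingHom
            (MvPolynomial.aeval (t ∘ Fin.succ) : MvPolynomial (Fin m) ℂ →ₐ[ℂ] R).toRingHom
            (t 0)).comp (finSuccEquiv ℂ m : MvPolynomial (Fin (m+1)) ℂ →+* _) := by
        apply MvPolynomial.ringHom_ext
        · intro c
          have hfc : (finSuccEquiv ℂ m) (C c) = Polynomial.C (MvPolynomial.C c) := by
            simp [MvPolynomial.finSuccEquiv_apply]
          simp [hfc]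
        · intro i
          refine Fin.cases ?_ ?_ i
          · simp [finSuccEquiv_X_zero]
          · intro j
            simp [finSuccEquiv_X_succ]
      exact congrArg (fun f => f Q') (congrArg DFunLike.coe this)
    set A : R := MvPolynomial.aeval (t ∘ Fin.succ) (P₁.coeff 0) with hA
    set B : R := Polynomial.eval₂
      (MvPolynomial.aeval (t ∘ Fin.succ) : MvPolynomial (Fin m) ℂ →ₐ[ℂ] R).toRingHom
      (t 0) P₁.divX with hB
    have hval : MvPolynomial.aeval t Q = (t 0) ^ d * (t 0 * B + A) := by
      rw [keval Q, ← hPdef, hfact, Polynomial.eval₂_mul, Polynomial.eval₂_X_pow]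
      congr 1
      conv_lhs => rw [← Polynomial.X_mul_divX_add P₁]
      rw [Polynomial.eval₂_add, Polynomial.eval₂_mul, Polynomial.eval₂_X, Polynomial.eval₂_C]
      rfl
    rw [hval] at haQ
    have ht00 : t 0 ∉ p 0 := by simpa using hnmem 0
    have hsum : t 0 * B + A ∈ p 0 := by
      rcases (hprime 0).mem_or_mem haQ with h | h
      · exact absurd ((hprime 0).mem_of_pow_mem d h) ht00
      · exact h
    have hA1 : A ∈ p (Fin.succ 0) := by
      have h01 : p 0 ≤ p (Fin.succ 0) := by simpa using hchain 0
      have h1 : t 0 * B + A ∈ p (Fin.succ 0) := h01 hsum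
      have h2 : t 0 ∈ p (Fin.succ 0) := hmem 0
      have hAe : A = (t 0 * B + A) - t 0 * B := by ring
      rw [hAe]
      exact Ideal.sub_mem _ h1 (Ideal.mul_mem_right _ _ h2)
    -- apply induction hypothesis
    refine ih (p ∘ Fin.succ) (fun k => hprime k.succ) ?_
      (t ∘ Fin.succ) (fun i => hmem i.succ) ?_ (P₁.coeff 0) hc0 hA1
    · intro i
      show p i.castSucc.succ ≤ p i.succ.succ
      rw [Fin.succ_castSucc]
      exact hchain i.succ
    · intro i
      show t i.succ ∉ p i.castSucc.succ
      rw [Fin.succ_castSucc]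
      exact hnmem i.succ

section Sdesc
variable {q : ℕ}

lemma T_apply (hq : 2 ≤ q) (T : Fin (q + 1) → Fin (q + 1) → Fin q → ℂ)
    (hT : T =
      ∑ j : Fin q,
        (E (⟨0, Nat.succ_pos q⟩ : Fin (q + 1)) ⟨(j : ℕ) + 1, Nat.succ_lt_succ j.isLt⟩ j +
         E ⟨(j : ℕ) + 1, Nat.succ_lt_succ j.isLt⟩ ⟨0, Nat.succ_pos q⟩ j)) :
    ∀ a b c, T a b c = (if a = 0 ∧ b = Fin.succ c then 1 else 0) +
      (if a = Fin.succ c ∧ b = 0 then 1 else 0) := by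
  intro a b c
  subst hT
  simp only [Finset.sum_apply, Pi.add_apply, E]
  rw [Finset.sum_add_distrib]
  congr 1
  · rw [Finset.sum_eq_single c]
    · have h0 : (⟨0, Nat.succ_pos q⟩ : Fin (q+1)) = 0 := rfl
      have hs : (⟨(c : ℕ) + 1, Nat.succ_lt_succ c.isLt⟩ : Fin (q+1)) = Fin.succ c := rfl
      simp [h0, hs]
    · intro j _ hj
      rw [if_neg (by tauto)]
    · intro h; exact absurd (Finset.mem_univ c) h
  · rw [Finset.sum_eq_single c]
    · have h0 : (⟨0, Nat.succ_pos q⟩ : Fin (q+1)) = 0 := rfl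
      have hs : (⟨(c : ℕ) + 1, Nat.succ_lt_succ c.isLt⟩ : Fin (q+1)) = Fin.succ c := rfl
      simp [h0, hs]
    · intro j _ hj
      rw [if_neg (by tauto)]
    · intro h; exact absurd (Finset.mem_univ c) h

lemma mem_S (hq : 2 ≤ q) (T : Fin (q + 1) → Fin (q + 1) → Fin q → ℂ)
    (hT : T =
      ∑ j : Fin q,
        (E (⟨0, Nat.succ_pos q⟩ : Fin (q + 1)) ⟨(j : ℕ) + 1, Nat.succ_lt_succ j.isLt⟩ j +
         E ⟨(j : ℕ) + 1, Nat.succ_lt_succ j.isLt⟩ ⟨0, Nat.succ_pos q⟩ j)) (x : Fin (q+1) ⊕ Fin (q+1) → ℂ) :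
    x ∈ hatSigmaAB T ↔ ∀ k : Fin q,
      x (Sum.inl 0) * x (Sum.inr (Fin.succ k)) + x (Sum.inl (Fin.succ k)) * x (Sum.inr 0) = 0 := by
  have key : ∀ k : Fin q, ∑ i, ∑ j, T i j k * x (Sum.inl i) * x (Sum.inr j)
      = x (Sum.inl 0) * x (Sum.inr (Fin.succ k)) + x (Sum.inl (Fin.succ k)) * x (Sum.inr 0) := by
    intro k
    simp only [T_apply hq T hT, add_mul, ite_mul, one_mul, zero_mul, Finset.sum_add_distrib]
    congr 1
    · rw [Finset.sum_comm]
      simp [ite_and, Finset.sum_ite_eq']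
    · simp [ite_and, Finset.sum_ite_eq']
  constructor
  · intro hx k; rw [← key k]; exact hx k
  · intro hx k; rw [key k]; exact hx k

end Sdesc

lemma eval_aeval' {σ τ : Type} (g : σ → MvPolynomial τ ℂ) (x' : τ → ℂ) (x : σ → ℂ)
    (h : ∀ v, eval x' (g v) = x v) (f : MvPolynomial σ ℂ) :
    eval x' (aeval g f) = eval x f := by
  have heq : (eval x').comp ((aeval g : MvPolynomial σ ℂ →ₐ[ℂ] MvPolynomial τ ℂ) :
      MvPolynomial σ ℂ →+* MvPolynomial τ ℂ) = (eval x) := by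
    apply ringHom_ext
    · intro c; simp
    · intro v; simp [h v]
  exact DFunLike.congr_fun heq f

noncomputable def gL (q : ℕ) : Fin (q+1) ⊕ Fin (q+1) → MvPolynomial (Fin q ⊕ Fin q) ℂ
  | Sum.inl i => Fin.cases 0 (fun j => X (Sum.inl j)) i
  | Sum.inr i => Fin.cases 0 (fun j => X (Sum.inr j)) i

noncomputable def gZ (q : ℕ) : Fin (q+1) ⊕ Fin (q+1) → MvPolynomial (Fin (q+1)) ℂ
  | Sum.inl _ => 0
  | Sum.inr i => X i

noncomputable def gM (q : ℕ) : Fin (q+1) ⊕ Fin (q+1) → MvPolynomial (Option (Fin (q+1))) ℂ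
  | Sum.inl i => X (some i)
  | Sum.inr i => Fin.cases (X none * X (some 0)) (fun j => -(X none * X (some j.succ))) i

lemma vanish_L {q : ℕ} (x : Fin (q+1) ⊕ Fin (q+1) → ℂ) (h0 : x (Sum.inl 0) = 0)
    (h0' : x (Sum.inr 0) = 0) (f : MvPolynomial (Fin (q+1) ⊕ Fin (q+1)) ℂ)
    (hf : aeval (gL q) f = 0) : eval x f = 0 := by
  have h := eval_aeval' (gL q)
    (Sum.elim (fun j => x (Sum.inl (Fin.succ j))) (fun j => x (Sum.inr (Fin.succ j)))) x ?_ f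
  · rw [hf, map_zero] at h; exact h.symm
  · rintro (i | i) <;> induction i using Fin.cases <;> simp [gL, h0, h0']

lemma vanish_Z {q : ℕ} (x : Fin (q+1) ⊕ Fin (q+1) → ℂ) (h0 : ∀ i, x (Sum.inl i) = 0)
    (f : MvPolynomial (Fin (q+1) ⊕ Fin (q+1)) ℂ)
    (hf : aeval (gZ q) f = 0) : eval x f = 0 := by
  have h := eval_aeval' (gZ q) (fun j => x (Sum.inr j)) x ?_ f
  · rw [hf, map_zero] at h; exact h.symm
  · rintro (i | i) <;> simp [gZ, h0]

lemma vanish_M {q : ℕ} (x : Fin (q+1) ⊕ Fin (q+1) → ℂ) (h0 : x (Sum.inl 0) ≠ 0)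
    (heq : ∀ k : Fin q, x (Sum.inl 0) * x (Sum.inr (Fin.succ k))
      + x (Sum.inl (Fin.succ k)) * x (Sum.inr 0) = 0)
    (f : MvPolynomial (Fin (q+1) ⊕ Fin (q+1)) ℂ)
    (hf : aeval (gM q) f = 0) : eval x f = 0 := by
  have h := eval_aeval' (gM q)
    (Option.rec (x (Sum.inr 0) / x (Sum.inl 0)) (fun i => x (Sum.inl i))) x ?_ f
  · rw [hf, map_zero] at h; exact h.symm
  · rintro (i | i)
    · simp [gM]
    · induction i using Fin.cases with
      | zero => simp [gM]; field_simp
      | succ j =>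
        simp [gM]
        have hj := heq j
        field_simp
        linear_combination -hj

lemma chain_bound {R : Type} [CommRing R] [Algebra ℂ R] (I : Ideal R) (n : ℕ)
    (hdep : ∀ t : Fin (n+1) → R, ∃ Q : MvPolynomial (Fin (n+1)) ℂ, Q ≠ 0 ∧ aeval t Q ∈ I) :
    ringKrullDim (R ⧸ I) ≤ ((n : ℕ) : WithBot (WithTop ℕ)) := by
  classical
  rw [ringKrullDim, Order.krullDim]
  refine iSup_le ?_
  intro ch
  have hch : ch.length ≤ n := by
    by_contra hlen
    push_neg at hlen
    have hP : ∀ i : Fin (n+2), True := fun _ => trivial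
    set P : Fin (n+2) → Ideal R :=
      fun i => Ideal.comap (Ideal.Quotient.mk I) (ch.toFun ⟨(i : ℕ), by omega⟩).asIdeal with hPdef
    have hPprime : ∀ i, (P i).IsPrime := fun i => Ideal.IsPrime.comap _
    have hmono : ∀ i : Fin (n+1), P i.castSucc < P i.succ := by
      intro i
      have hlt : (⟨((i.castSucc : Fin (n+2)) : ℕ), by omega⟩ : Fin (ch.length+1))
          < ⟨((i.succ : Fin (n+2)) : ℕ), by omega⟩ := by
        simp only [Fin.lt_def, Fin.coe_castSucc, Fin.val_succ]
        omega
      have h2 := ch.strictMono hlt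
      constructor
      · exact Ideal.comap_mono (le_of_lt h2)
      · intro hle
        have heq : P i.castSucc = P i.succ :=
          le_antisymm (Ideal.comap_mono (le_of_lt h2)) hle
        rw [hPdef] at heq
        have hinj := congrArg (Ideal.map (Ideal.Quotient.mk I)) heq
        rw [Ideal.map_comap_of_surjective _ Ideal.Quotient.mk_surjective,
          Ideal.map_comap_of_surjective _ Ideal.Quotient.mk_surjective] at hinj
        exact (ne_of_lt h2) (PrimeSpectrum.ext hinj)
    choose t ht1 ht2 using fun i => SetLike.exists_of_lt (hmono i)
    obtain ⟨Q, hQ0, hQI⟩ := hdep t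
    have hI0 : I ≤ P 0 := by
      intro f hf
      simp only [hPdef, Ideal.mem_comap]
      rw [Ideal.Quotient.eq_zero_iff_mem.mpr hf]
      exact Ideal.zero_mem _
    exact cl_lemma (n+1) P hPprime (fun i => le_of_lt (hmono i)) t ht1 ht2 Q hQ0 (hI0 hQI)
  exact (WithBot.coe_le_coe.mpr (WithTop.coe_le_coe.mpr hch) :
    ((ch.length : ℕ∞) : WithBot ℕ∞) ≤ _)

lemma upper_bound {q : ℕ} (hq : 2 ≤ q) (T : Fin (q + 1) → Fin (q + 1) → Fin q → ℂ)
    (hT : T =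
      ∑ j : Fin q,
        (E (⟨0, Nat.succ_pos q⟩ : Fin (q + 1)) ⟨(j : ℕ) + 1, Nat.succ_lt_succ j.isLt⟩ j +
         E ⟨(j : ℕ) + 1, Nat.succ_lt_succ j.isLt⟩ ⟨0, Nat.succ_pos q⟩ j)) :
    affineDim (hatSigmaAB T) ≤ ((2 * q : ℕ) : WithBot (WithTop ℕ)) := by
  classical
  rw [affineDim]
  apply chain_bound
  intro t
  obtain ⟨QL, hQL0, hQLa⟩ := exists_annihilator (2*q+1)
    (by simp [Fintype.card_sum]; omega) (fun i => aeval (gL q) (t i))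
  obtain ⟨QZ, hQZ0, hQZa⟩ := exists_annihilator (2*q+1)
    (by simp; omega) (fun i => aeval (gZ q) (t i))
  obtain ⟨QM, hQM0, hQMa⟩ := exists_annihilator (2*q+1)
    (by simp; omega) (fun i => aeval (gM q) (t i))
  have hkerL : aeval (gL q) (aeval t QL) = 0 := by
    rw [← AlgHom.comp_apply, comp_aeval]; exact hQLa
  have hkerZ : aeval (gZ q) (aeval t QZ) = 0 := by
    rw [← AlgHom.comp_apply, comp_aeval]; exact hQZa
  have hkerM : aeval (gM q) (aeval t QM) = 0 := by
    rw [← AlgHom.comp_apply, comp_aeval]; exact hQMa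
  refine ⟨QL * QZ * QM, mul_ne_zero (mul_ne_zero hQL0 hQZ0) hQM0, ?_⟩
  show ∀ x ∈ hatSigmaAB T, eval x (aeval t (QL * QZ * QM)) = 0
  intro x hx
  have heqs := (mem_S hq T hT x).mp hx
  rw [map_mul, map_mul, map_mul, map_mul]
  by_cases hx0 : x (Sum.inl 0) = 0
  · by_cases hy0 : x (Sum.inr 0) = 0
    · rw [vanish_L x hx0 hy0 _ hkerL]; ring
    · have hz : ∀ i, x (Sum.inl i) = 0 := by
        intro i
        induction i using Fin.cases with
        | zero => exact hx0
        | succ j =>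
          have hj := heqs j
          rw [hx0] at hj
          simp at hj
          rcases hj with h | h
          · exact h
          · exact absurd h hy0
      rw [vanish_Z x hz _ hkerZ]; ring
  · rw [vanish_M x hx0 heqs _ hkerM]; ring

open Classical in
noncomputable def eVar (q : ℕ) : Fin (2*q) → Fin (q+1) ⊕ Fin (q+1) := fun k =>
  if h : (k : ℕ) < q then Sum.inl (Fin.succ ⟨k, h⟩)
  else Sum.inr (Fin.succ ⟨(k : ℕ) - q, by have := k.isLt; omega⟩)

lemma eVar_inj (q : ℕ) : Function.Injective (eVar q) := by
  intro a b hab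
  unfold eVar at hab
  split_ifs at hab with h1 h2 h3
  · have := Fin.succ_injective _ (Sum.inl.inj hab)
    apply Fin.ext
    simpa [Fin.ext_iff] using this
  · have := Fin.succ_injective _ (Sum.inr.inj hab)
    have h4 := a.isLt
    have h5 := b.isLt
    simp [Fin.ext_iff] at this
    apply Fin.ext
    omega

def condV (q k : ℕ) (v : Fin (q+1) ⊕ Fin (q+1)) : Prop :=
  v = Sum.inl 0 ∨ v = Sum.inr 0 ∨ ∃ j : Fin (2*q), (j : ℕ) < k ∧ eVar q j = v

open Classical in
noncomputable def ψ (q k : ℕ) :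
    MvPolynomial (Fin (q+1) ⊕ Fin (q+1)) ℂ →ₐ[ℂ] MvPolynomial (Fin (q+1) ⊕ Fin (q+1)) ℂ :=
  aeval (fun v => if condV q k v then 0 else X v)

lemma condV_mono {q k k' : ℕ} (h : k ≤ k') {v} (hv : condV q k v) : condV q k' v := by
  rcases hv with h1 | h1 | ⟨j, hj, hj2⟩
  · exact Or.inl h1
  · exact Or.inr (Or.inl h1)
  · exact Or.inr (Or.inr ⟨j, by omega, hj2⟩)

lemma ψ_comp {q k k' : ℕ} (h : k ≤ k') (f) : ψ q k' (ψ q k f) = ψ q k' f := by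
  classical
  have : (ψ q k').comp (ψ q k) = ψ q k' := by
    apply MvPolynomial.algHom_ext
    intro v
    simp only [AlgHom.comp_apply, ψ, aeval_X]
    by_cases hv : condV q k v
    · rw [if_pos hv, map_zero, if_pos (condV_mono h hv)]
    · rw [if_neg hv, aeval_X]
  exact DFunLike.congr_fun this f

lemma ker_mono {q k k' : ℕ} (h : k ≤ k') :
    RingHom.ker (ψ q k).toRingHom ≤ RingHom.ker (ψ q k').toRingHom := by
  intro f hf
  have hf' : ψ q k f = 0 := hf
  show ψ q k' f = 0
  rw [← ψ_comp h f, hf', map_zero]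

lemma ψ_X_eVar_zero {q : ℕ} (j : Fin (2*q)) {k : ℕ} (hk : (j:ℕ) < k) :
    ψ q k (X (eVar q j)) = 0 := by
  classical
  rw [ψ, aeval_X, if_pos (show condV q k (eVar q j) from Or.inr (Or.inr ⟨j, hk, rfl⟩))]

lemma ψ_X_eVar_ne {q : ℕ} (j : Fin (2*q)) {k : ℕ} (hk : k ≤ (j:ℕ)) :
    ψ q k (X (eVar q j)) = X (eVar q j) := by
  classical
  rw [ψ, aeval_X, if_neg]
  rintro (h1 | h1 | ⟨j', hj', hj2⟩)
  · unfold eVar at h1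
    split_ifs at h1 with h
    · exact Fin.succ_ne_zero _ (Sum.inl.inj h1)
  · unfold eVar at h1
    split_ifs at h1 with h
    · exact Fin.succ_ne_zero _ (Sum.inr.inj h1)
  · have := eVar_inj q hj2
    subst this
    omega

lemma I_le_ker {q : ℕ} (hq : 2 ≤ q) (T : Fin (q + 1) → Fin (q + 1) → Fin q → ℂ)
    (hT : T =
      ∑ j : Fin q,
        (E (⟨0, Nat.succ_pos q⟩ : Fin (q + 1)) ⟨(j : ℕ) + 1, Nat.succ_lt_succ j.isLt⟩ j +
         E ⟨(j : ℕ) + 1, Nat.succ_lt_succ j.isLt⟩ ⟨0, Nat.succ_pos q⟩ j)) (k : ℕ) :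
    vanishingIdeal' (hatSigmaAB T) ≤ RingHom.ker (ψ q k).toRingHom := by
  classical
  refine le_trans ?_ (ker_mono (Nat.zero_le k))
  intro f hf
  show ψ q 0 f = 0
  apply MvPolynomial.funext
  intro x
  rw [map_zero]
  have heval := eval_aeval' (fun v => if condV q 0 v then 0 else X v)
    x (fun v => if condV q 0 v then 0 else x v) ?_ f
  · rw [show (ψ q 0 f : MvPolynomial (Fin (q+1) ⊕ Fin (q+1)) ℂ) = aeval
      (fun v => if condV q 0 v then 0 else X v) f from rfl, heval]
    apply hf
    rw [mem_S hq T hT]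
    intro k'
    have h1 : (if condV q 0 (Sum.inl (0 : Fin (q+1))) then (0:ℂ)
        else x (Sum.inl 0)) = 0 := if_pos (Or.inl rfl)
    have h2 : (if condV q 0 (Sum.inr (0 : Fin (q+1))) then (0:ℂ)
        else x (Sum.inr 0)) = 0 := if_pos (Or.inr (Or.inl rfl))
    simp only [h1, h2, zero_mul, mul_zero, add_zero]
  · intro v
    by_cases hv : condV q 0 v
    · rw [if_pos hv, if_pos hv, map_zero]
    · rw [if_neg hv, if_neg hv, eval_X]

lemma lower_chain {R : Type} [CommRing R] (I : Ideal R) (n : ℕ)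
    (K : Fin (n+1) → Ideal R) (hKp : ∀ k, (K k).IsPrime)
    (hmono : ∀ i : Fin n, K i.castSucc ≤ K i.succ)
    (hne : ∀ i : Fin n, K i.castSucc ≠ K i.succ)
    (hIK : ∀ k, I ≤ K k) :
    ((n : ℕ) : WithBot (WithTop ℕ)) ≤ ringKrullDim (R ⧸ I) := by
  have hprime : ∀ k, (Ideal.map (Ideal.Quotient.mk I) (K k)).IsPrime := by
    intro k
    haveI := hKp k
    exact Ideal.map_isPrime_of_surjective Ideal.Quotient.mk_surjective
      (by rw [Ideal.mk_ker]; exact hIK k)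
  have hstep : ∀ i : Fin n, (⟨_, hprime i.castSucc⟩ : PrimeSpectrum (R ⧸ I))
      < ⟨_, hprime i.succ⟩ := by
    intro i
    constructor
    · exact Ideal.map_mono (hmono i)
    · intro hge
      apply hne i
      have heq : Ideal.map (Ideal.Quotient.mk I) (K i.castSucc)
          = Ideal.map (Ideal.Quotient.mk I) (K i.succ) :=
        le_antisymm (Ideal.map_mono (hmono i)) hge
      have hcoma := congrArg (Ideal.comap (Ideal.Quotient.mk I)) heq
      rw [Ideal.comap_map_of_surjective _ Ideal.Quotient.mk_surjective,
        Ideal.comap_map_of_surjective _ Ideal.Quotient.mk_surjective] at hcoma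
      have hk : Ideal.comap (Ideal.Quotient.mk I) (⊥ : Ideal (R ⧸ I)) = I := by
        rw [← RingHom.ker_eq_comap_bot, Ideal.mk_ker]
      rw [hk, sup_eq_left.mpr (hIK _), sup_eq_left.mpr (hIK _)] at hcoma
      exact hcoma
  exact Order.LTSeries.length_le_krullDim
    (⟨n, fun k => ⟨_, hprime k⟩, hstep⟩ : LTSeries (PrimeSpectrum (R ⧸ I)))

lemma lower_bound {q : ℕ} (hq : 2 ≤ q) (T : Fin (q + 1) → Fin (q + 1) → Fin q → ℂ)
    (hT : T =
      ∑ j : Fin q,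
        (E (⟨0, Nat.succ_pos q⟩ : Fin (q + 1)) ⟨(j : ℕ) + 1, Nat.succ_lt_succ j.isLt⟩ j +
         E ⟨(j : ℕ) + 1, Nat.succ_lt_succ j.isLt⟩ ⟨0, Nat.succ_pos q⟩ j)) :
    ((2 * q : ℕ) : WithBot (WithTop ℕ)) ≤ affineDim (hatSigmaAB T) := by
  classical
  rw [affineDim]
  refine lower_chain _ (2*q) (fun k => RingHom.ker (ψ q (k : ℕ)).toRingHom)
    (fun k => RingHom.ker_isPrime _) ?_ ?_ (fun k => I_le_ker hq T hT _)
  · intro i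
    exact ker_mono (by simp)
  · intro i
    intro heq
    have heq' : RingHom.ker (ψ q ((i.castSucc : Fin (2*q+1)) : ℕ)).toRingHom
        = RingHom.ker (ψ q ((i.succ : Fin (2*q+1)) : ℕ)).toRingHom := heq
    have hXmem : X (eVar q i) ∈ RingHom.ker (ψ q ((i.succ : Fin (2*q+1)) : ℕ)).toRingHom := by
      show ψ q _ (X (eVar q i)) = 0
      apply ψ_X_eVar_zero
      simp
    rw [← heq'] at hXmem
    have hne2 : ψ q ((i.castSucc : Fin (2*q+1)) : ℕ) (X (eVar q i)) = X (eVar q i) := by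
      apply ψ_X_eVar_ne
      simp
    have hX0 : (X (eVar q i) : MvPolynomial (Fin (q+1) ⊕ Fin (q+1)) ℂ) = 0 := by
      rw [← hne2]; exact hXmem
    exact MvPolynomial.X_ne_zero _ hX0

/-- Strassen's tensor `T_{str,q} ∈ ℂ^{q+1} ⊗ ℂ^{q+1} ⊗ ℂ^q`, `q ≥ 2`,
has geometric rank `2`. -/
theorem stmt_16 (q : ℕ) (hq : 2 ≤ q)
    (T : Fin (q + 1) → Fin (q + 1) → Fin q → ℂ)
    (hT : T =
      ∑ j : Fin q,
        (E (⟨0, by omega⟩ : Fin (q + 1)) ⟨(j : ℕ) + 1, by have := j.isLt; omega⟩ j +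
         E ⟨(j : ℕ) + 1, by have := j.isLt; omega⟩ ⟨0, by omega⟩ j)) :
    geomRank T = 2 := by
  have hdim : affineDim (hatSigmaAB T) = ((2 * q : ℕ) : WithBot (WithTop ℕ)) :=
    le_antisymm (upper_bound hq T hT) (lower_bound hq T hT)
  have hnat : affineDimNat (hatSigmaAB T) = 2 * q := by
    rw [affineDimNat, hdim]
    have h1 : ((2 * q : ℕ) : WithBot (WithTop ℕ)) = ((((2*q : ℕ) : ℕ∞)) : WithBot ℕ∞) := rfl
    rw [h1, WithBot.unbotD_coe, ENat.toNat_coe]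
  rw [geomRank, hnat]
  simp only [Fintype.card_fin]
  omega
end
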